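/- Let R be a ring and n a non-negative integer. Any direct product of n-weak flat right R-modules is n-weak flat; that is, if {M_i}_{i∈I} is a family of n-weak flat right R-modules, then ∏_{i∈I} M_i is n-weak flat. -/

import Mathlib

/-! Definitions for `n`-weak injective and `n`-weak flat modules over an arbitrary
(associative, unital, possibly noncommutative) ring `R`, following
Amini–Amzil–Bennis, "On n-weak injective and n-weak flat modules".

Left `R`-modules are types with `[Module R M]`; right `R`-modules are types with
`[Module Rᵐᵒᵖ M]`.  `Ext` is the derived functor of the ℤ-linear Yoneda functor on
`ModuleCat R`, and `Tor` is obtained as the left derived functor of the balanced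
tensor product `N ⊗_R -` (constructed as a quotient of the ℤ-tensor product). -/

open CategoryTheory Limits TensorProduct

noncomputable section

universe u

namespace NWeak

variable (R : Type u) [Ring R]

/-- A left `R`-module `U` is *`n`-super finitely presented* if it admits a resolution
`⋯ → F_{n+1} → F_n → ⋯ → F_1 → F_0 → U → 0` by projective modules in which `F_i` is
finitely generated for every `i ≥ n`. -/
def IsNSuperFP (n : ℕ) (U : Type u) [AddCommGroup U] [Module R U] : Prop :=
  ∃ (F : ℕ → ModuleCat.{u} R) (d : ∀ i, F (i + 1) ⟶ F i) (ε : F 0 →ₗ[R] U),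
    (∀ i, Module.Projective R (F i)) ∧
    (∀ i, n ≤ i → Module.Finite R (F i)) ∧
    Function.Surjective ε ∧
    Function.Exact (d 0) ε ∧
    (∀ i, Function.Exact (d (i + 1)) (d i))

/-- A left `R`-module `K` is *special super finitely presented* (relative to `n`) if
there are an `n`-super finitely presented module `U` and a resolution
`⋯ → F_{n+1} → F_n → ⋯ → F_0 → U → 0` as above such that `K ≅ Im (F_n → F_{n-1})`,
where for `n = 0` we read `K_{-1} := U`. -/
def IsSpecialSFP (n : ℕ) (K : Type u) [AddCommGroup K] [Module R K] : Prop :=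
  ∃ (F : ℕ → ModuleCat.{u} R) (d : ∀ i, F (i + 1) ⟶ F i) (U : ModuleCat.{u} R)
    (ε : F 0 ⟶ U),
    (∀ i, Module.Projective R (F i)) ∧
    (∀ i, n ≤ i → Module.Finite R (F i)) ∧
    Function.Surjective ε ∧
    Function.Exact (d 0) ε ∧
    (∀ i, Function.Exact (d (i + 1)) (d i)) ∧
    (match n with
      | 0 => Nonempty (K ≃ₗ[R] U)
      | m + 1 => Nonempty (K ≃ₗ[R] LinearMap.range (d m).hom))

/-- Vanishing of `Ext_R^i(K, M)` for left `R`-modules. -/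
def extVanish (i : ℕ) (K : Type u) [AddCommGroup K] [Module R K]
    (M : Type u) [AddCommGroup M] [Module R M] : Prop :=
  Subsingleton (((Ext ℤ (ModuleCat.{u} R) i).obj
    (Opposite.op (ModuleCat.of R K))).obj (ModuleCat.of R M))

/-- A left `R`-module `M` is *`n`-weak injective* if `Ext_R^{n+1}(U, M) = 0` for every
`n`-super finitely presented left `R`-module `U`. -/
def IsNWeakInjective (n : ℕ) (M : Type u) [AddCommGroup M] [Module R M] : Prop :=
  ∀ (U : ModuleCat.{u} R), IsNSuperFP R n U → extVanish R (n + 1) U M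

/-- The left `R`-module `M` has *`n`-weak injective dimension at most `k`* if
`Ext_R^{k+1}(K, M) = 0` for every special super finitely presented left `R`-module
`K`. -/
def WIDimLE (n k : ℕ) (M : Type u) [AddCommGroup M] [Module R M] : Prop :=
  ∀ (K : ModuleCat.{u} R), IsSpecialSFP R n K → extVanish R (k + 1) K M

/-! ### The balanced tensor product and Tor -/

/-- The additive subgroup of `N ⊗[ℤ] K` generated by the balancing relations
`(n·r) ⊗ k - n ⊗ (r·k)`. -/
def balRel (N : Type u) [AddCommGroup N] [Module Rᵐᵒᵖ N]
    (K : Type u) [AddCommGroup K] [Module R K] : AddSubgroup (N ⊗[ℤ] K) :=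
  AddSubgroup.closure
    {x | ∃ (a : N) (r : R) (b : K),
      x = (MulOpposite.op r • a) ⊗ₜ[ℤ] b - a ⊗ₜ[ℤ] (r • b)}

/-- The balanced tensor product `N ⊗_R K` of a right `R`-module `N` and a left
`R`-module `K`, realized as a quotient of `N ⊗[ℤ] K`. -/
def RTensor (N : Type u) [AddCommGroup N] [Module Rᵐᵒᵖ N]
    (K : Type u) [AddCommGroup K] [Module R K] : Type u :=
  (N ⊗[ℤ] K) ⧸ balRel R N K

instance (N : Type u) [AddCommGroup N] [Module Rᵐᵒᵖ N]
    (K : Type u) [AddCommGroup K] [Module R K] : AddCommGroup (RTensor R N K) :=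
  inferInstanceAs (AddCommGroup ((N ⊗[ℤ] K) ⧸ balRel R N K))

variable {R}

/-- Functoriality of the balanced tensor product in the left-module variable. -/
def balMapRight (N : Type u) [AddCommGroup N] [Module Rᵐᵒᵖ N]
    {K K' : Type u} [AddCommGroup K] [Module R K] [AddCommGroup K'] [Module R K']
    (f : K →ₗ[R] K') : RTensor R N K →+ RTensor R N K' :=
  QuotientAddGroup.map _ _
    (TensorProduct.map (LinearMap.id : N →ₗ[ℤ] N) (f.restrictScalars ℤ)).toAddMonoidHom
    (by
      rw [balRel, AddSubgroup.closure_le]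
      rintro x ⟨a, r, b, rfl⟩
      simp only [SetLike.mem_coe, AddSubgroup.mem_comap, LinearMap.toAddMonoidHom_coe,
        map_sub, TensorProduct.map_tmul, LinearMap.coe_restrictScalars, LinearMap.id_coe,
        id_eq, LinearMap.map_smul]
      exact AddSubgroup.subset_closure ⟨a, r, f b, rfl⟩)

/-- Functoriality of the balanced tensor product in the right-module variable. -/
def balMapLeft (K : Type u) [AddCommGroup K] [Module R K]
    {N N' : Type u} [AddCommGroup N] [Module Rᵐᵒᵖ N] [AddCommGroup N'] [Module Rᵐᵒᵖ N']
    (g : N →ₗ[Rᵐᵒᵖ] N') : RTensor R N K →+ RTensor R N' K :=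
  QuotientAddGroup.map _ _
    (TensorProduct.map (g.restrictScalars ℤ) (LinearMap.id : K →ₗ[ℤ] K)).toAddMonoidHom
    (by
      rw [balRel, AddSubgroup.closure_le]
      rintro x ⟨a, r, b, rfl⟩
      simp only [SetLike.mem_coe, AddSubgroup.mem_comap, LinearMap.toAddMonoidHom_coe,
        map_sub, TensorProduct.map_tmul, LinearMap.coe_restrictScalars, LinearMap.id_coe,
        id_eq, LinearMap.map_smul]
      exact AddSubgroup.subset_closure ⟨g a, r, b, rfl⟩)

lemma balMapRight_mk (N : Type u) [AddCommGroup N] [Module Rᵐᵒᵖ N]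
    {K K' : Type u} [AddCommGroup K] [Module R K] [AddCommGroup K'] [Module R K']
    (f : K →ₗ[R] K') (y : N ⊗[ℤ] K) :
    balMapRight N f (QuotientAddGroup.mk y)
      = QuotientAddGroup.mk (TensorProduct.map (LinearMap.id : N →ₗ[ℤ] N)
          (f.restrictScalars ℤ) y) := rfl

variable (R)

/-- The functor `K ↦ N ⊗_R K` from left `R`-modules to abelian groups, for a fixed
right `R`-module `N`. -/
def tensorFunctor (N : Type u) [AddCommGroup N] [Module Rᵐᵒᵖ N] :
    ModuleCat.{u} R ⥤ AddCommGrpCat.{u} where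
  obj K := AddCommGrpCat.of (RTensor R N K)
  map {K K'} f := AddCommGrpCat.ofHom (balMapRight N f.hom)
  map_id K := by
    refine AddCommGrpCat.ext fun x => ?_
    refine QuotientAddGroup.induction_on x fun y => ?_
    show balMapRight N (LinearMap.id) (QuotientAddGroup.mk y) = QuotientAddGroup.mk y
    rw [balMapRight_mk]
    congr 1
    refine TensorProduct.induction_on y (by simp) (fun a b => by simp) ?_
    intro s t hs ht
    simp_all [map_add]
  map_comp {K K' K''} f g := by
    refine AddCommGrpCat.ext fun x => ?_
    refine QuotientAddGroup.induction_on x fun y => ?_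
    show balMapRight N (g.hom.comp f.hom) (QuotientAddGroup.mk y)
      = balMapRight N g.hom (balMapRight N f.hom (QuotientAddGroup.mk y))
    rw [balMapRight_mk, balMapRight_mk, balMapRight_mk]
    congr 1
    refine TensorProduct.induction_on y (by simp) (fun a b => by simp) ?_
    intro s t hs ht
    simp_all [map_add]

instance (N : Type u) [AddCommGroup N] [Module Rᵐᵒᵖ N] : (tensorFunctor R N).Additive where
  map_add {K K'} {f g} := by
    refine AddCommGrpCat.ext fun x => ?_
    refine QuotientAddGroup.induction_on x fun y => ?_
    show balMapRight N (f + g).hom (QuotientAddGroup.mk y)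
      = balMapRight N f.hom (QuotientAddGroup.mk y) + balMapRight N g.hom (QuotientAddGroup.mk y)
    rw [balMapRight_mk, balMapRight_mk, balMapRight_mk]
    refine Eq.trans ?_ (QuotientAddGroup.mk_add (N := balRel R N K') _ _)
    congr 1
    refine TensorProduct.induction_on y (by simp)
      (fun a b => by
        simp only [TensorProduct.map_tmul, LinearMap.coe_restrictScalars, LinearMap.id_coe, id_eq]
        rw [show (f + g).hom b = f.hom b + g.hom b from rfl, TensorProduct.tmul_add]) ?_
    intro s t hs ht
    simp_all [map_add]
    abel

/-- Vanishing of `Tor_i^R(N, K)` for a right `R`-module `N` and a left `R`-module `K`: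
the `i`-th left derived functor of `N ⊗_R -` vanishes at `K`. -/
def torVanish (i : ℕ) (N : Type u) [AddCommGroup N] [Module Rᵐᵒᵖ N]
    (K : Type u) [AddCommGroup K] [Module R K] : Prop :=
  Subsingleton (((tensorFunctor R N).leftDerived i).obj (ModuleCat.of R K))

/-- A right `R`-module `N` is *`n`-weak flat* if `Tor^R_{n+1}(N, U) = 0` for every
`n`-super finitely presented left `R`-module `U`. -/
def IsNWeakFlat (n : ℕ) (N : Type u) [AddCommGroup N] [Module Rᵐᵒᵖ N] : Prop :=
  ∀ (U : ModuleCat.{u} R), IsNSuperFP R n U → torVanish R (n + 1) N U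

/-- The right `R`-module `N` has *`n`-weak flat dimension at most `k`* if
`Tor^R_{k+1}(N, K) = 0` for every special super finitely presented left `R`-module
`K`. -/
def WFDimLE (n k : ℕ) (N : Type u) [AddCommGroup N] [Module Rᵐᵒᵖ N] : Prop :=
  ∀ (K : ModuleCat.{u} R), IsSpecialSFP R n K → torVanish R (k + 1) N K

/-! ### Character modules -/

/-- The character module `M⋆ = Hom_ℤ(M, ℚ/ℤ)` of a left `R`-module is a right
`R`-module via `(f · r) (m) = f (r · m)`. -/
instance charModuleRight (M : Type u) [AddCommGroup M] [Module R M] :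
    Module Rᵐᵒᵖ (CharacterModule M) where
  smul ρ f := f.comp (DistribMulAction.toAddMonoidHom M ρ.unop)
  one_smul f := CharacterModule.ext _ fun m => congrArg f (one_smul R m)
  mul_smul ρ σ f := CharacterModule.ext _ fun m => congrArg f (mul_smul σ.unop ρ.unop m)
  smul_zero ρ := CharacterModule.ext _ fun _ => rfl
  smul_add ρ f g := CharacterModule.ext _ fun _ => rfl
  add_smul ρ σ f := CharacterModule.ext _ fun m => by
    show f ((ρ.unop + σ.unop) • m) = f (ρ.unop • m) + f (σ.unop • m)
    rw [add_smul, map_add]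
  zero_smul f := CharacterModule.ext _ fun m => by
    show f ((0 : R) • m) = 0
    rw [zero_smul, map_zero]

/-- The character module `N⋆ = Hom_ℤ(N, ℚ/ℤ)` of a right `R`-module is a left
`R`-module via `(r · f) (m) = f (m · r)`. -/
instance charModuleLeft (N : Type u) [AddCommGroup N] [Module Rᵐᵒᵖ N] :
    Module R (CharacterModule N) where
  smul r f := f.comp (DistribMulAction.toAddMonoidHom N (MulOpposite.op r))
  one_smul f := CharacterModule.ext _ fun m => congrArg f (one_smul Rᵐᵒᵖ m)
  mul_smul r s f := CharacterModule.ext _ fun m => congrArg f (by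
    show (MulOpposite.op (r * s)) • m = (MulOpposite.op s) • (MulOpposite.op r) • m
    rw [← mul_smul, MulOpposite.op_mul])
  smul_zero r := CharacterModule.ext _ fun _ => rfl
  smul_add r f g := CharacterModule.ext _ fun _ => rfl
  add_smul r s f := CharacterModule.ext _ fun m => by
    show f ((MulOpposite.op r + MulOpposite.op s) • m)
      = f ((MulOpposite.op r) • m) + f ((MulOpposite.op s) • m)
    rw [add_smul, map_add]
  zero_smul f := CharacterModule.ext _ fun m => by
    show f ((0 : Rᵐᵒᵖ) • m) = 0
    rw [zero_smul, map_zero]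

/-! ### Purity and flatness -/

/-- A submodule `N` of a left `R`-module `M` is *pure* if for every right `R`-module
`L` the induced map `L ⊗_R N → L ⊗_R M` is injective. -/
def IsPureSubmodule (M : Type u) [AddCommGroup M] [Module R M] (N : Submodule R M) :
    Prop :=
  ∀ (L : Type u) [AddCommGroup L] [Module Rᵐᵒᵖ L],
    Function.Injective (balMapRight L N.subtype)

/-- A submodule `N` of a right `R`-module `M` is *pure* if for every left `R`-module
`L` the induced map `N ⊗_R L → M ⊗_R L` is injective. -/
def IsPureSubmoduleRight (M : Type u) [AddCommGroup M] [Module Rᵐᵒᵖ M]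
    (N : Submodule Rᵐᵒᵖ M) : Prop :=
  ∀ (L : Type u) [AddCommGroup L] [Module R L],
    Function.Injective (balMapLeft L N.subtype)

/-- A left `R`-module `M` is *flat* if tensoring with `M` preserves injectivity of
maps of right `R`-modules. -/
def IsFlatLeft (M : Type u) [AddCommGroup M] [Module R M] : Prop :=
  ∀ (A B : Type u) [AddCommGroup A] [Module Rᵐᵒᵖ A] [AddCommGroup B] [Module Rᵐᵒᵖ B]
    (g : A →ₗ[Rᵐᵒᵖ] B), Function.Injective g → Function.Injective (balMapLeft M g)

/-- The left `R`-module `K` has *projective dimension at most `m`*: there is an exact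
sequence `0 → P_m → ⋯ → P_1 → P_0 → K → 0` with all `P_i` projective (encoded by a
projective resolution vanishing in degrees `> m`). -/
def ProjDimLE (K : Type u) [AddCommGroup K] [Module R K] (m : ℕ) : Prop :=
  ∃ (P : ℕ → ModuleCat.{u} R) (d : ∀ i, P (i + 1) ⟶ P i) (ε : P 0 →ₗ[R] K),
    (∀ i, Module.Projective R (P i)) ∧
    Function.Surjective ε ∧
    Function.Exact (d 0) ε ∧
    (∀ i, Function.Exact (d (i + 1)) (d i)) ∧
    (∀ i, m < i → Subsingleton (P i))

end NWeak

namespace NWeak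

section Aux

variable {R : Type u} [Ring R]

section Basic

variable {N : Type u} [AddCommGroup N] [Module Rᵐᵒᵖ N]
variable {K : Type u} [AddCommGroup K] [Module R K]

/-- Induction principle for elements of the balanced tensor product. -/
lemma RTensor.ind {p : RTensor R N K → Prop}
    (htmul : ∀ (a : N) (b : K), p (QuotientAddGroup.mk (a ⊗ₜ[ℤ] b)))
    (h0 : p 0) (hadd : ∀ x y, p x → p y → p (x + y)) : ∀ x, p x := by
  intro x
  refine QuotientAddGroup.induction_on x fun y => ?_
  refine TensorProduct.induction_on y h0 htmul ?_
  intro s t hs ht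
  exact hadd _ _ hs ht

lemma balMapLeft_mk {N N' : Type u} [AddCommGroup N] [Module Rᵐᵒᵖ N]
    [AddCommGroup N'] [Module Rᵐᵒᵖ N'] (K : Type u) [AddCommGroup K] [Module R K]
    (g : N →ₗ[Rᵐᵒᵖ] N') (y : N ⊗[ℤ] K) :
    balMapLeft K g (QuotientAddGroup.mk y)
      = QuotientAddGroup.mk (TensorProduct.map (g.restrictScalars ℤ)
          (LinearMap.id : K →ₗ[ℤ] K) y) := rfl

lemma RTensor.mk_op_smul (r : R) (a : N) (b : K) :
    (QuotientAddGroup.mk ((MulOpposite.op r • a) ⊗ₜ[ℤ] b) : RTensor R N K)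
      = QuotientAddGroup.mk (a ⊗ₜ[ℤ] (r • b)) := by
  refine QuotientAddGroup.eq.mpr ?_
  have h : (MulOpposite.op r • a) ⊗ₜ[ℤ] b - a ⊗ₜ[ℤ] (r • b) ∈ balRel R N K :=
    AddSubgroup.subset_closure ⟨a, r, b, rfl⟩
  have h2 := (balRel R N K).neg_mem h
  rw [neg_sub] at h2
  rw [neg_add_eq_sub]
  exact h2

lemma balMapRight_tmul {K' : Type u} [AddCommGroup K'] [Module R K']
    (f : K →ₗ[R] K') (a : N) (b : K) :
    balMapRight N f (QuotientAddGroup.mk (a ⊗ₜ[ℤ] b))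
      = QuotientAddGroup.mk (a ⊗ₜ[ℤ] f b) := by
  rw [balMapRight_mk]; simp; rfl

lemma balMapLeft_tmul {N' : Type u} [AddCommGroup N'] [Module Rᵐᵒᵖ N']
    (g : N →ₗ[Rᵐᵒᵖ] N') (a : N) (b : K) :
    balMapLeft K g (QuotientAddGroup.mk (a ⊗ₜ[ℤ] b))
      = QuotientAddGroup.mk (g a ⊗ₜ[ℤ] b) := by
  rw [balMapLeft_mk]; simp; rfl

lemma balMapRight_id (x : RTensor R N K) :
    balMapRight N (LinearMap.id : K →ₗ[R] K) x = x := by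
  induction x using RTensor.ind with
  | htmul a b => rw [balMapRight_tmul]; rfl
  | h0 => simp [map_zero]
  | hadd x y hx hy => rw [map_add, hx, hy]

lemma balMapRight_comp {K' K'' : Type u} [AddCommGroup K'] [Module R K']
    [AddCommGroup K''] [Module R K''] (f : K →ₗ[R] K') (g : K' →ₗ[R] K'')
    (x : RTensor R N K) :
    balMapRight N (g ∘ₗ f) x = balMapRight N g (balMapRight N f x) := by
  induction x using RTensor.ind with
  | htmul a b => rw [balMapRight_tmul, balMapRight_tmul, balMapRight_tmul]; rfl
  | h0 => simp [map_zero]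
  | hadd x y hx hy => rw [map_add, map_add, map_add, hx, hy]

lemma balMapLeft_balMapRight_comm {N' : Type u} [AddCommGroup N'] [Module Rᵐᵒᵖ N']
    {K' : Type u} [AddCommGroup K'] [Module R K']
    (g : N →ₗ[Rᵐᵒᵖ] N') (f : K →ₗ[R] K') (x : RTensor R N K) :
    balMapLeft K' g (balMapRight N f x) = balMapRight N' f (balMapLeft K g x) := by
  induction x using RTensor.ind with
  | htmul a b =>
      rw [balMapRight_tmul, balMapLeft_tmul, balMapLeft_tmul, balMapRight_tmul]
  | h0 => simp [map_zero]
  | hadd x y hx hy => rw [map_add, map_add, map_add, map_add, hx, hy]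

end Basic

section Fin

variable (N : Type u) [AddCommGroup N] [Module Rᵐᵒᵖ N] (m : ℕ)

/-- The underlying bi-additive map `N → R^m → N^m`. -/
def toFinAux : N →+ (Fin m → R) →+ (Fin m → N) where
  toFun a :=
    { toFun := fun b j => MulOpposite.op (b j) • a
      map_zero' := by funext j; simp
      map_add' := by intro b c; funext j; simp [add_smul] }
  map_zero' := by ext b j; simp
  map_add' := by intro a a'; ext b j; simp [smul_add]

lemma toFinAux_compat (z : ℤ) (a : N) (b : Fin m → R) :
    toFinAux (R := R) N m (z • a) b = toFinAux (R := R) N m a (z • b) := by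
  funext j
  show MulOpposite.op (b j) • (z • a) = MulOpposite.op ((z • b) j) • a
  have h1 : MulOpposite.op (b j) • (z • a) = z • (MulOpposite.op (b j) • a) :=
    (DistribMulAction.toAddMonoidHom N (MulOpposite.op (b j))).map_zsmul z a
  have h2 : MulOpposite.op ((z • b) j) • a = z • (MulOpposite.op (b j) • a) := by
    rw [Pi.smul_apply, MulOpposite.op_smul]
    exact (AddMonoidHom.mk' (fun s : Rᵐᵒᵖ => s • a)
      (fun s t => add_smul s t a)).map_zsmul z (MulOpposite.op (b j))
  rw [h1, h2]

/-- The evaluation map `N ⊗_R R^m → N^m`. -/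
def toFin : RTensor R N (Fin m → R) →+ (Fin m → N) :=
  QuotientAddGroup.lift _
    (TensorProduct.liftAddHom (toFinAux (R := R) N m) (toFinAux_compat N m))
    (by
      intro x hx
      have hle : balRel R N (Fin m → R) ≤ AddMonoidHom.ker
          (TensorProduct.liftAddHom (toFinAux (R := R) N m) (toFinAux_compat N m)) := by
        rw [balRel, AddSubgroup.closure_le]
        rintro x ⟨a, r, b, rfl⟩
        simp only [SetLike.mem_coe, AddMonoidHom.mem_ker, map_sub,
          TensorProduct.liftAddHom_tmul]
        rw [sub_eq_zero]
        funext j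
        show MulOpposite.op (b j) • (MulOpposite.op r • a)
          = MulOpposite.op ((r • b) j) • a
        rw [Pi.smul_apply, smul_eq_mul, ← mul_smul, ← MulOpposite.op_mul]
      exact hle hx)

lemma toFin_tmul (a : N) (b : Fin m → R) :
    toFin (R := R) N m (QuotientAddGroup.mk (a ⊗ₜ[ℤ] b))
      = fun j => MulOpposite.op (b j) • a := rfl

/-- The inverse map `N^m → N ⊗_R R^m`. -/
def frmFin : (Fin m → N) →+ RTensor R N (Fin m → R) where
  toFun v := ∑ j : Fin m, QuotientAddGroup.mk (v j ⊗ₜ[ℤ] (Pi.single j (1 : R)))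
  map_zero' := by simp; exact Finset.sum_const_zero
  map_add' := by
    intro v w
    show (∑ j : Fin m, (QuotientAddGroup.mk ((v + w) j ⊗ₜ[ℤ] (Pi.single j (1 : R)))
        : RTensor R N (Fin m → R)))
      = (∑ j : Fin m, (QuotientAddGroup.mk (v j ⊗ₜ[ℤ] (Pi.single j (1 : R)))
        : RTensor R N (Fin m → R)))
        + ∑ j : Fin m, (QuotientAddGroup.mk (w j ⊗ₜ[ℤ] (Pi.single j (1 : R)))
        : RTensor R N (Fin m → R))
    have h : ∀ j : Fin m, (QuotientAddGroup.mk ((v + w) j ⊗ₜ[ℤ] (Pi.single j (1 : R)))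
        : RTensor R N (Fin m → R))
        = QuotientAddGroup.mk (v j ⊗ₜ[ℤ] (Pi.single j (1 : R)))
          + QuotientAddGroup.mk (w j ⊗ₜ[ℤ] (Pi.single j (1 : R))) := by
      intro j
      rw [Pi.add_apply, TensorProduct.add_tmul, QuotientAddGroup.mk_add]
    rw [Finset.sum_congr rfl fun j _ => h j, Finset.sum_add_distrib]

lemma toFin_frmFin (v : Fin m → N) : toFin (R := R) N m (frmFin (R := R) N m v) = v := by
  show toFin (R := R) N m (∑ j : Fin m, (QuotientAddGroup.mk
    (v j ⊗ₜ[ℤ] (Pi.single j (1 : R))) : RTensor R N (Fin m → R))) = v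
  erw [map_sum]
  funext k
  rw [Finset.sum_apply]
  have : ∀ j : Fin m, toFin (R := R) N m (QuotientAddGroup.mk
      (v j ⊗ₜ[ℤ] (Pi.single j (1 : R)))) k = if k = j then v j else 0 := by
    intro j
    rw [toFin_tmul]
    by_cases hkj : k = j
    · subst hkj; simp
    · simp [Pi.single_apply, hkj]
  rw [Finset.sum_congr rfl fun j _ => this j]
  simp

lemma frmFin_toFin (x : RTensor R N (Fin m → R)) :
    frmFin (R := R) N m (toFin (R := R) N m x) = x := by
  induction x using RTensor.ind with
  | htmul a b =>
      rw [toFin_tmul]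
      show ∑ j : Fin m, QuotientAddGroup.mk
          ((MulOpposite.op (b j) • a) ⊗ₜ[ℤ] (Pi.single j (1 : R)))
        = QuotientAddGroup.mk (a ⊗ₜ[ℤ] b)
      have : ∀ j : Fin m, (QuotientAddGroup.mk
          ((MulOpposite.op (b j) • a) ⊗ₜ[ℤ] (Pi.single j (1 : R)))
            : RTensor R N (Fin m → R))
          = QuotientAddGroup.mk (a ⊗ₜ[ℤ] (Pi.single j (b j))) := by
        intro j
        rw [RTensor.mk_op_smul]
        congr 2
        funext k
        by_cases hkj : k = j
        · subst hkj; simp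
        · simp [Pi.single_apply, hkj]
      rw [Finset.sum_congr rfl fun j _ => this j]
      have hsum : ∑ j : Fin m, (QuotientAddGroup.mk (a ⊗ₜ[ℤ] (Pi.single j (b j)))
          : RTensor R N (Fin m → R))
          = QuotientAddGroup.mk (∑ j : Fin m, a ⊗ₜ[ℤ] (Pi.single j (b j))) := by
        exact (map_sum (QuotientAddGroup.mk' (balRel R N (Fin m → R))) _ _).symm
      rw [hsum, ← TensorProduct.tmul_sum, Finset.univ_sum_single]
  | h0 => simp [map_zero]
  | hadd x y hx hy => rw [map_add, map_add, hx, hy]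

end Fin

section Theta

variable {ι : Type u} (M : ι → Type u) [∀ i, AddCommGroup (M i)] [∀ i, Module Rᵐᵒᵖ (M i)]
variable (K : Type u) [AddCommGroup K] [Module R K]

/-- The comparison map `(∏ M i) ⊗_R K → ∏ (M i ⊗_R K)`. -/
def theta : RTensor R (∀ i, M i) K →+ ∀ i, RTensor R (M i) K where
  toFun x i := balMapLeft K ((LinearMap.proj i : (∀ i, M i) →ₗ[Rᵐᵒᵖ] M i)) x
  map_zero' := by
    funext i
    exact (balMapLeft K ((LinearMap.proj i : (∀ i, M i) →ₗ[Rᵐᵒᵖ] M i))).map_zero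
  map_add' := by
    intro x y
    funext i
    exact (balMapLeft K ((LinearMap.proj i : (∀ i, M i) →ₗ[Rᵐᵒᵖ] M i))).map_add x y

variable {M K}

lemma theta_tmul (a : ∀ i, M i) (b : K) :
    theta (R := R) M K (QuotientAddGroup.mk (a ⊗ₜ[ℤ] b)) = fun i =>
      QuotientAddGroup.mk (a i ⊗ₜ[ℤ] b) := by
  funext i
  exact balMapLeft_tmul ((LinearMap.proj i : (∀ i, M i) →ₗ[Rᵐᵒᵖ] M i)) a b

lemma theta_natural {K' : Type u} [AddCommGroup K'] [Module R K'] (f : K →ₗ[R] K')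
    (x : RTensor R (∀ i, M i) K) :
    theta (R := R) M K' (balMapRight _ f x) = fun i => balMapRight (M i) f (theta (R := R) M K x i) := by
  funext i
  exact balMapLeft_balMapRight_comm ((LinearMap.proj i : (∀ i, M i) →ₗ[Rᵐᵒᵖ] M i)) f x

lemma theta_fin_bijective (m : ℕ) : Function.Bijective (theta (R := R) M (Fin m → R)) := by
  have hR : ∀ (x : RTensor R (∀ i, M i) (Fin m → R)),
      frmFin (R := R) (∀ i, M i) m (fun j => fun i => toFin (R := R) (M i) m
        (theta (R := R) M (Fin m → R) x i) j) = x := by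
    intro x
    induction x using RTensor.ind with
    | htmul a b =>
        rw [theta_tmul]
        have : (fun j => fun i => toFin (R := R) (M i) m
            (QuotientAddGroup.mk (a i ⊗ₜ[ℤ] b)) j)
            = fun j => MulOpposite.op (b j) • a := by
          funext j i
          rw [toFin_tmul]
          rfl
        rw [this]
        have := frmFin_toFin (R := R) (∀ i, M i) m (QuotientAddGroup.mk (a ⊗ₜ[ℤ] b))
        rwa [toFin_tmul] at this
    | h0 =>
        have h0' : (fun j => fun i => toFin (R := R) (M i) m
            (theta (R := R) M (Fin m → R) (0 : RTensor R (∀ i, M i) (Fin m → R)) i) j)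
            = (0 : Fin m → ∀ i, M i) := by
          funext j i
          have h1 : theta (R := R) M (Fin m → R)
              (0 : RTensor R (∀ i, M i) (Fin m → R)) i = 0 := by
            rw [map_zero]; rfl
          rw [h1, map_zero]
          rfl
        rw [h0']
        exact map_zero _
    | hadd x y hx hy =>
        rw [map_add]
        have hsplit : (fun j => fun i => toFin (R := R) (M i) m
              ((theta (R := R) M (Fin m → R) x + theta (R := R) M (Fin m → R) y) i) j)
            = (fun j => fun i => toFin (R := R) (M i) m (theta (R := R) M (Fin m → R) x i) j)
              + fun j => fun i => toFin (R := R) (M i) m (theta (R := R) M (Fin m → R) y i) j := by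
          funext j i
          show toFin (R := R) (M i) m (theta (R := R) M (Fin m → R) x i
            + theta (R := R) M (Fin m → R) y i) j = _
          rw [map_add]
          rfl
        rw [hsplit, map_add, hx, hy]
  constructor
  · intro x y hxy
    have := hR x
    rw [hxy] at this
    rw [← this, hR y]
  · intro w
    refine ⟨frmFin (R := R) (∀ i, M i) m (fun j i => toFin (R := R) (M i) m (w i) j), ?_⟩
    funext i
    show balMapLeft (Fin m → R) ((LinearMap.proj i : (∀ i, M i) →ₗ[Rᵐᵒᵖ] M i))
      (∑ j : Fin m, (QuotientAddGroup.mk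
        ((fun i => toFin (R := R) (M i) m (w i) j) ⊗ₜ[ℤ] (Pi.single j (1 : R)))
          : RTensor R (∀ i, M i) (Fin m → R))) = w i
    erw [map_sum]
    have : ∀ j : Fin m, balMapLeft (Fin m → R) ((LinearMap.proj i : (∀ i, M i) →ₗ[Rᵐᵒᵖ] M i))
        (QuotientAddGroup.mk ((fun i => toFin (R := R) (M i) m (w i) j)
          ⊗ₜ[ℤ] (Pi.single j (1 : R))))
        = QuotientAddGroup.mk (toFin (R := R) (M i) m (w i) j ⊗ₜ[ℤ] (Pi.single j (1 : R))) := by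
      intro j
      exact balMapLeft_tmul _ _ _
    rw [Finset.sum_congr rfl fun j _ => this j]
    exact frmFin_toFin (R := R) (M i) m (w i)

lemma theta_bijective (K : Type u) [AddCommGroup K] [Module R K]
    [Module.Finite R K] [Module.Projective R K] :
    Function.Bijective (theta (R := R) M K) := by
  obtain ⟨m, p, hp⟩ := Module.Finite.exists_fin' R K
  obtain ⟨s, hs⟩ := Module.projective_lifting_property p LinearMap.id hp
  have hps : ∀ (N : Type u) [AddCommGroup N] [Module Rᵐᵒᵖ N]
      (x : RTensor R N K), balMapRight N p (balMapRight N s x) = x := by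
    intro N _ _ x
    rw [← balMapRight_comp, hs, balMapRight_id]
  constructor
  · intro x y hxy
    have h1 : theta (R := R) M (Fin m → R) (balMapRight _ s x)
        = theta (R := R) M (Fin m → R) (balMapRight _ s y) := by
      rw [theta_natural, theta_natural, hxy]
    have h2 := (theta_fin_bijective (M := M) m).1 h1
    have := congrArg (balMapRight (∀ i, M i) p) h2
    rwa [hps, hps] at this
  · intro w
    obtain ⟨y, hy⟩ := (theta_fin_bijective (M := M) m).2
      (fun i => balMapRight (M i) s (w i))
    refine ⟨balMapRight _ p y, ?_⟩
    rw [theta_natural, hy]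
    funext i
    exact hps (M i) (w i)

end Theta

lemma AddCommGrp_isZero_iff (A : AddCommGrpCat.{u}) :
    Limits.IsZero A ↔ Subsingleton A := by
  constructor
  · intro h
    refine ⟨fun x y => ?_⟩
    have h1 : (𝟙 A : A ⟶ A) = 0 := h.eq_of_src _ _
    have hx : (𝟙 A : A ⟶ A) x = (0 : A ⟶ A) x := by rw [h1]
    have hy : (𝟙 A : A ⟶ A) y = (0 : A ⟶ A) y := by rw [h1]
    calc x = (𝟙 A : A ⟶ A) x := rfl
    _ = (0 : A ⟶ A) x := hx
    _ = (0 : A ⟶ A) y := rfl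
    _ = (𝟙 A : A ⟶ A) y := hy.symm
    _ = y := rfl
  · intro h
    exact @AddCommGrpCat.isZero_of_subsingleton A h

end Aux

end NWeak

open NWeak in
/-- Any direct product of `n`-weak flat right `R`-modules is
`n`-weak flat. -/
theorem pi_isNWeakFlat
    (R : Type u) [Ring R] (n : ℕ) (ι : Type u) (M : ι → Type u)
    [∀ i, AddCommGroup (M i)] [∀ i, Module Rᵐᵒᵖ (M i)]
    (h : ∀ i, IsNWeakFlat R n (M i)) :
    IsNWeakFlat R n (∀ i, M i) := by
  intro U hU
  obtain ⟨F, d, ε, hproj, hfin, hsurj, hex0, hex⟩ := id hU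
  -- the chosen projective resolution of `U`
  let C : ChainComplex (ModuleCat.{u} R) ℕ :=
    ChainComplex.of (fun i => F i) d (fun i => by
      ext x
      exact (hex i).apply_apply_eq_zero x)
  have hCd : ∀ i, C.d (i + 1) i = d i := fun i => ChainComplex.of_d _ _ i
  haveI hCproj : ∀ i, CategoryTheory.Projective (C.X i) := fun i =>
    (IsProjective.iff_projective (R := R) (F i)).mp (hproj i)
  let X : ModuleCat.{u} R := ModuleCat.of R U
  let π : C ⟶ (ChainComplex.single₀ (ModuleCat.{u} R)).obj X :=
    (ChainComplex.toSingle₀Equiv C X).symm ⟨ModuleCat.ofHom ε, by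
      ext x
      show ε ((C.d 1 0).hom x) = 0
      rw [hCd 0]
      exact hex0.apply_apply_eq_zero x⟩
  have hπ0 : π.f 0 = ModuleCat.ofHom ε := ChainComplex.toSingle₀Equiv_symm_apply_f_zero _ _
  have hCexact : ∀ k : ℕ, C.ExactAt (k + 1) := by
    intro k
    rw [HomologicalComplex.exactAt_iff' C (k + 2) (k + 1) k (by simp) (by simp),
      ShortComplex.moduleCat_exact_iff]
    intro x hx
    have hx' : d k x = 0 := by rw [← hCd k]; exact hx
    obtain ⟨w, hw⟩ := (hex k x).1 hx'
    exact ⟨w, by show C.d (k + 2) (k + 1) w = x; rw [hCd (k + 1)]; exact hw⟩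
  let P : CategoryTheory.ProjectiveResolution X :=
    { complex := C
      projective := hCproj
      π := π
      quasiIso := ⟨fun i => by
        cases i with
        | zero =>
          rw [ChainComplex.quasiIsoAt₀_iff, ShortComplex.quasiIso_iff_of_zeros']
          · refine ⟨?_, ?_⟩
            · rw [ShortComplex.moduleCat_exact_iff]
              intro x hx
              have hx' : ε x = 0 := by
                have h' : (ModuleCat.ofHom ε).hom x = 0 := by rw [← hπ0]; exact hx
                exact h'
              obtain ⟨w, hw⟩ := (hex0 x).1 hx'
              exact ⟨w, by show C.d 1 0 w = x; rw [hCd 0]; exact hw⟩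
            · show Epi (π.f 0)
              rw [hπ0]
              exact (ModuleCat.epi_iff_surjective (ModuleCat.ofHom ε)).2 hsurj
          all_goals rfl
        | succ k =>
          rw [quasiIsoAt_iff_exactAt']
          · exact hCexact k
          · exact ChainComplex.exactAt_succ_single_obj _ _⟩ }
  -- computation of `Tor_{n+1}(N, U)` via the resolution `P`
  have key : ∀ (N : Type u) [AddCommGroup N] [Module Rᵐᵒᵖ N],
      torVanish R (n + 1) N U ↔
        ∀ x : RTensor R N (F (n + 1)), balMapRight N (d n).hom x = 0 →
          ∃ y : RTensor R N (F (n + 2)), balMapRight N (d (n + 1)).hom y = x := by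
    intro N _ _
    let G := tensorFunctor R N
    let D := (G.mapHomologicalComplex (ComplexShape.down ℕ)).obj C
    have e : ((G.leftDerived (n + 1)).obj X) ≅ D.homology (n + 1) :=
      P.isoLeftDerivedObj G (n + 1)
    have h1 : torVanish R (n + 1) N U ↔ Limits.IsZero (D.homology (n + 1)) := by
      constructor
      · intro hs
        exact ((AddCommGrp_isZero_iff _).2 hs).of_iso e.symm
      · intro hz
        exact (AddCommGrp_isZero_iff _).1 (hz.of_iso e)
    have h2 : Limits.IsZero (D.homology (n + 1)) ↔ D.ExactAt (n + 1) :=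
      (HomologicalComplex.exactAt_iff_isZero_homology D (n + 1)).symm
    have h3 : D.ExactAt (n + 1) ↔
        ∀ x : RTensor R N (F (n + 1)), balMapRight N (d n).hom x = 0 →
          ∃ y : RTensor R N (F (n + 2)), balMapRight N (d (n + 1)).hom y = x := by
      rw [HomologicalComplex.exactAt_iff' D (n + 2) (n + 1) n (by simp) (by simp),
        ShortComplex.ab_exact_iff]
      constructor
      · intro H x hx
        obtain ⟨y, hy⟩ := H x
          (show balMapRight N (C.d (n + 1) n).hom x = 0 by rw [hCd n]; exact hx)
        refine ⟨y, ?_⟩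
        have hy' : balMapRight N (C.d (n + 2) (n + 1)).hom y = x := hy
        rwa [hCd (n + 1)] at hy'
      · intro H x hx
        have hx' : balMapRight N (d n).hom x = 0 := by
          have hx2 : balMapRight N (C.d (n + 1) n).hom x = 0 := hx
          rwa [hCd n] at hx2
        obtain ⟨y, hy⟩ := H x hx'
        exact ⟨y, show balMapRight N (C.d (n + 2) (n + 1)).hom y = x by
          rw [hCd (n + 1)]; exact hy⟩
    exact h1.trans (h2.trans h3)
  -- now reduce the product statement to componentwise statements
  haveI : Module.Finite R (F (n + 1)) := hfin (n + 1) (Nat.le_succ n)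
  haveI : Module.Projective R (F (n + 1)) := hproj (n + 1)
  haveI : Module.Finite R (F (n + 2)) := hfin (n + 2) (by omega)
  haveI : Module.Projective R (F (n + 2)) := hproj (n + 2)
  rw [key (∀ i, M i)]
  intro x hx
  have hcomp : ∀ i, balMapRight (M i) (d n).hom (theta (R := R) M (F (n + 1)) x i) = 0 := by
    intro i
    calc balMapRight (M i) (d n).hom (theta (R := R) M (F (n + 1)) x i)
        = theta (R := R) M (F n) (balMapRight _ (d n).hom x) i :=
          (congrFun (theta_natural (d n).hom x) i).symm
      _ = theta (R := R) M (F n) 0 i := by rw [hx]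
      _ = 0 := by rw [map_zero]; rfl
  choose y hy using fun i =>
    ((key (M i)).1 (h i U hU)) (theta (R := R) M (F (n + 1)) x i) (hcomp i)
  obtain ⟨z, hz⟩ := (theta_bijective (M := M) (F (n + 2))).2 y
  refine ⟨z, ?_⟩
  apply (theta_bijective (M := M) (F (n + 1))).1
  rw [theta_natural, hz]
  funext i
  exact hy i
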